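/- Assume F ⊆ ℝ^p is nonempty compact and admits a (ν, ρ) separated structure, and let 0 < α < log ν / log ρ. Then the piecewise constant functions with finitely many pieces are dense among the 1-Hölder-α functions on F: for every 1-Hölder-α function f : F → ℝ and every ε > 0 there exists a 1-Hölder-α function g : F → ℝ with finite range (constant on each element of one of the finite families 𝒮_k) such that ‖f − g‖_∞ < ε. -/

import Mathlib

noncomputable section

/-- A nonempty set `F ⊆ ℝ^p` admits a `(ν, ρ)` separated structure: there are
`K > 0` and, for every `k`, a finite family `𝒮_k` of sets covering `F`, each of
diameter `< K ν^k`, with distinct members at (inf) distance `> (1/K) ρ^k`. -/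
def SepStructure {p : ℕ} (ν ρ : ℝ) (F : Set (EuclideanSpace ℝ (Fin p))) : Prop :=
  ∃ K : ℝ, 0 < K ∧ ∀ k : ℕ, ∃ S : Finset (Set (EuclideanSpace ℝ (Fin p))),
    (F ⊆ ⋃ A ∈ S, A) ∧
    (∀ A ∈ S, EMetric.diam A < ENNReal.ofReal (K * ν ^ k)) ∧
    (∀ A ∈ S, ∀ B ∈ S, A ≠ B →
      ENNReal.ofReal ((1 / K) * ρ ^ k) < ⨅ x ∈ A, EMetric.infEdist x B)

namespace Stmt9Aux

open Real Filter

open scoped Classical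

variable {E : Type*} [MetricSpace E]

lemma rpow_subadd {α x y : ℝ} (hx : 0 ≤ x) (hy : 0 ≤ y) (h0 : 0 ≤ α) (h1 : α ≤ 1) :
    (x + y) ^ α ≤ x ^ α + y ^ α := by
  have h := NNReal.rpow_add_le_add_rpow x.toNNReal y.toNNReal h0 h1
  have h2 := NNReal.coe_le_coe.mpr h
  push_cast [NNReal.coe_rpow] at h2
  rwa [Real.coe_toNNReal x hx, Real.coe_toNNReal y hy] at h2

/-- `x` and `y` lie in a common piece of `S`. -/
def Rel (S : Finset (Set E)) (x y : E) : Prop := ∃ A ∈ S, x ∈ A ∧ y ∈ A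

lemma rel_symm {S : Finset (Set E)} {x y : E} (h : Rel S x y) : Rel S y x := by
  obtain ⟨A, hA, h1, h2⟩ := h; exact ⟨A, hA, h2, h1⟩

/-- Step cost: `0` within a piece, `dist^α` across pieces. -/
noncomputable def cost (S : Finset (Set E)) (α : ℝ) (x y : E) : ℝ :=
  if Rel S x y then 0 else dist x y ^ α

lemma cost_nonneg (S : Finset (Set E)) (α : ℝ) (x y : E) : 0 ≤ cost S α x y := by
  by_cases hR : Rel S x y <;> simp [cost, hR, Real.rpow_nonneg dist_nonneg]

lemma cost_le (S : Finset (Set E)) (α : ℝ) (x y : E) : cost S α x y ≤ dist x y ^ α := by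
  by_cases hR : Rel S x y <;> simp [cost, hR, Real.rpow_nonneg dist_nonneg]

/-- Cost of a chain. -/
noncomputable def cc (S : Finset (Set E)) (α : ℝ) : List E → ℝ
  | [] => 0
  | [_] => 0
  | a :: b :: t => cost S α a b + cc S α (b :: t)

/-- Number of jumps (steps across distinct pieces) of a chain. -/
noncomputable def jm (S : Finset (Set E)) : List E → ℕ
  | [] => 0
  | [_] => 0
  | a :: b :: t => (if Rel S a b then 0 else 1) + jm S (b :: t)

lemma cc_nonneg (S : Finset (Set E)) (α : ℝ) : ∀ l : List E, 0 ≤ cc S α l := by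
  intro l
  induction l with
  | nil => simp [cc]
  | cons a t ih =>
    cases t with
    | nil => simp [cc]
    | cons b t' =>
      have := cost_nonneg S α a b
      simp only [cc]
      linarith

/-- A chain from `x` to `z` inside `F`. -/
def Chn (F : Set E) (x z : E) (l : List E) : Prop :=
  (∀ a ∈ l, a ∈ F) ∧ l.head? = some x ∧ l.getLast? = some z

/-- Chain distance. -/
noncomputable def del (S : Finset (Set E)) (F : Set E) (α : ℝ) (x z : E) : ℝ :=
  sInf (cc S α '' {l | Chn F x z l})

lemma chn_pair {F : Set E} {x z : E} (hx : x ∈ F) (hz : z ∈ F) : Chn F x z [x, z] := by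
  refine ⟨?_, rfl, by simp⟩
  intro a ha
  simp only [List.mem_cons, List.mem_singleton, List.not_mem_nil, or_false] at ha
  rcases ha with rfl | rfl <;> assumption

lemma chn_single {F : Set E} {x : E} (hx : x ∈ F) : Chn F x x [x] := by
  refine ⟨?_, rfl, by simp⟩
  intro a ha
  simp only [List.mem_singleton] at ha
  subst ha; exact hx

lemma dset_bddBelow (S : Finset (Set E)) (F : Set E) (α : ℝ) (x z : E) :
    BddBelow (cc S α '' {l | Chn F x z l}) := by
  refine ⟨0, ?_⟩
  rintro r ⟨l, -, rfl⟩
  exact cc_nonneg S α l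

lemma dset_nonempty {S : Finset (Set E)} {F : Set E} {α : ℝ} {x z : E}
    (hx : x ∈ F) (hz : z ∈ F) : (cc S α '' {l | Chn F x z l}).Nonempty :=
  ⟨cc S α [x, z], [x, z], chn_pair hx hz, rfl⟩

lemma del_le_cc {S : Finset (Set E)} {F : Set E} {α : ℝ} {x z : E} {l : List E}
    (hl : Chn F x z l) : del S F α x z ≤ cc S α l :=
  csInf_le (dset_bddBelow S F α x z) ⟨l, hl, rfl⟩

lemma del_nonneg {S : Finset (Set E)} {F : Set E} {α : ℝ} {x z : E}
    (hx : x ∈ F) (hz : z ∈ F) : 0 ≤ del S F α x z := by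
  apply le_csInf (dset_nonempty hx hz)
  rintro r ⟨l, -, rfl⟩
  exact cc_nonneg S α l

lemma del_self_nonpos {S : Finset (Set E)} {F : Set E} {α : ℝ} {x : E}
    (hx : x ∈ F) : del S F α x x ≤ 0 := by
  have h := del_le_cc (S := S) (α := α) (chn_single hx)
  simpa [cc] using h

lemma del_le_cost_add {S : Finset (Set E)} {F : Set E} {α : ℝ} {x y z : E}
    (hx : x ∈ F) (hy : y ∈ F) (hz : z ∈ F) :
    del S F α x z ≤ cost S α x y + del S F α y z := by
  have h1 : ∀ r ∈ cc S α '' {l | Chn F y z l}, del S F α x z - cost S α x y ≤ r := by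
    rintro r ⟨l, hl, rfl⟩
    obtain ⟨hmem, hh, hlast⟩ := hl
    obtain ⟨t, rfl⟩ : ∃ t, l = y :: t := by
      cases l with
      | nil => simp at hh
      | cons a t =>
        simp only [List.head?_cons, Option.some.injEq] at hh
        exact ⟨t, by rw [hh]⟩
    have hchn : Chn F x z (x :: y :: t) := by
      refine ⟨?_, rfl, ?_⟩
      · intro a ha
        rcases List.mem_cons.mp ha with rfl | h
        · exact hx
        · exact hmem a h
      · rw [List.getLast?_cons_cons]; exact hlast
    have h2 := del_le_cc (S := S) (α := α) hchn
    simp only [cc] at h2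
    linarith
  have h2 := le_csInf (dset_nonempty (S := S) (α := α) hy hz) h1
  have : del S F α x z - cost S α x y ≤ del S F α y z := h2
  linarith

lemma cc_one_rpow_le {S : Finset (Set E)} {α : ℝ} (hα0 : 0 < α) (hα1 : α ≤ 1) :
    ∀ l : List E, cc S 1 l ^ α ≤ cc S α l := by
  intro l
  induction l with
  | nil => simp [cc, Real.zero_rpow hα0.ne']
  | cons a t ih =>
    cases t with
    | nil => simp [cc, Real.zero_rpow hα0.ne']
    | cons b t' =>
      by_cases hR : Rel S a b
      · simpa [cc, cost, hR] using ih
      · have h1 : 0 ≤ cc S 1 (b :: t') := cc_nonneg S 1 _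
        have h2 : (dist a b + cc S 1 (b :: t')) ^ α
            ≤ dist a b ^ α + cc S 1 (b :: t') ^ α :=
          rpow_subadd dist_nonneg h1 hα0.le hα1
        simp only [cc, cost, hR, if_false, if_neg]
        rw [Real.rpow_one]
        have := ih
        linarith

lemma jm_mul_le {S : Finset (Set E)} {F : Set E} {α s : ℝ} (hs : 0 ≤ s) (hα0 : 0 < α)
    (hSlt : ∀ x y : E, x ∈ F → y ∈ F → ¬ Rel S x y → s ≤ dist x y) :
    ∀ l : List E, (∀ a ∈ l, a ∈ F) → (jm S l : ℝ) * s ^ α ≤ cc S α l := by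
  intro l
  induction l with
  | nil => intro _; simp [jm, cc]
  | cons a t ih =>
    intro hmem
    cases t with
    | nil => simp [jm, cc]
    | cons b t' =>
      have hmem' : ∀ u ∈ (b :: t'), u ∈ F := fun u hu => hmem u (List.mem_cons_of_mem a hu)
      have hih := ih hmem'
      by_cases hR : Rel S a b
      · simpa [jm, cc, cost, hR] using hih
      · have h1 : s ≤ dist a b :=
          hSlt a b (hmem a List.mem_cons_self) (hmem' b List.mem_cons_self) hR
        have h2 : s ^ α ≤ dist a b ^ α := Real.rpow_le_rpow hs h1 hα0.le
        simp only [jm, cc, cost, hR, if_neg, if_false]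
        push_cast
        nlinarith [h2, hih]

lemma dist_le_of_chain {S : Finset (Set E)} {F : Set E} {D : ℝ}
    (hDlt : ∀ x y : E, Rel S x y → dist x y ≤ D)
    (hRefl : ∀ x ∈ F, Rel S x x)
    (hTrans : ∀ w a b : E, Rel S w a → Rel S a b → Rel S w b) :
    ∀ l : List E, (∀ a ∈ l, a ∈ F) → ∀ x z w w' : E,
      l.head? = some x → l.getLast? = some z → Rel S w x → Rel S z w' →
      dist w w' ≤ cc S 1 l + ((jm S l : ℝ) + 1) * D := by
  intro l
  induction l with
  | nil => intro _ x z w w' hh _ _ _; simp at hh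
  | cons a t ih =>
    intro hmem x z w w' hh hlast hwx hzw'
    simp only [List.head?_cons, Option.some.injEq] at hh
    subst hh
    cases t with
    | nil =>
      have hz : a = z := by simpa using hlast
      subst hz
      have h1 : Rel S w w' := hTrans w a w' hwx hzw'
      have h2 := hDlt w w' h1
      simp only [cc, jm]
      push_cast
      linarith
    | cons b t' =>
      have hmem' : ∀ u ∈ (b :: t'), u ∈ F := fun u hu => hmem u (List.mem_cons_of_mem a hu)
      have hlast' : (b :: t').getLast? = some z := by
        rwa [List.getLast?_cons_cons] at hlast
      have hbF : b ∈ F := hmem' b List.mem_cons_self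
      by_cases hR : Rel S a b
      · have hwb : Rel S w b := hTrans w a b hwx hR
        have h1 := ih hmem' b z w w' rfl hlast' hwb hzw'
        simp only [cc, jm, cost]
        rw [if_pos hR, if_pos hR]
        push_cast
        linarith
      · have h1 := ih hmem' b z b w' rfl hlast' (hRefl b hbF) hzw'
        have h2 : dist w w' ≤ dist w a + dist a b + dist b w' := dist_triangle4 w a b w'
        have h3 : dist w a ≤ D := hDlt w a hwx
        simp only [cc, jm, cost]
        rw [if_neg hR, if_neg hR, Real.rpow_one]
        push_cast
        linarith

/-- Choice of a piece containing `x`. -/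
noncomputable def pieceSel (S : Finset (Set E)) (x : E) : Set E :=
  if h : ∃ A, A ∈ S ∧ x ∈ A then h.choose else ∅

lemma pieceSel_spec {S : Finset (Set E)} {x : E} (h : ∃ A, A ∈ S ∧ x ∈ A) :
    pieceSel S x ∈ S ∧ x ∈ pieceSel S x := by
  unfold pieceSel
  rw [dif_pos h]
  exact h.choose_spec

/-- Choice of a representative of `A ∩ F`. -/
noncomputable def repSel (F : Set E) (x₀ : E) (A : Set E) : E :=
  if h : (A ∩ F).Nonempty then h.choose else x₀

lemma repSel_spec {F : Set E} {x₀ : E} {A : Set E} (h : (A ∩ F).Nonempty) :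
    repSel F x₀ A ∈ A ∩ F := by
  unfold repSel
  rw [dif_pos h]
  exact h.choose_spec

end Stmt9Aux

end

noncomputable section

namespace Stmt9Aux

open Real Filter

variable {E : Type*} [MetricSpace E]

set_option maxHeartbeats 1600000 in
/-- Main construction, case `α ≤ 1`. -/
theorem main_le_one (F : Set E) (hFne : F.Nonempty) (hFb : Bornology.IsBounded F)
    (ν ρ : ℝ) (hν0 : 0 < ν) (hν1 : ν < 1) (hρ0 : 0 < ρ) (hρ1 : ρ < 1)
    (K : ℝ) (hK : 0 < K)
    (hS : ∀ k : ℕ, ∃ S : Finset (Set E), (F ⊆ ⋃ A ∈ S, A) ∧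
      (∀ A ∈ S, EMetric.diam A < ENNReal.ofReal (K * ν ^ k)) ∧
      (∀ A ∈ S, ∀ B ∈ S, A ≠ B →
        ENNReal.ofReal ((1 / K) * ρ ^ k) < ⨅ x ∈ A, EMetric.infEdist x B))
    (α : ℝ) (hα0 : 0 < α) (hα1 : α ≤ 1) (hνρ : ν < ρ ^ α)
    (f : E → ℝ) (hf : ∀ x ∈ F, ∀ y ∈ F, |f x - f y| ≤ dist x y ^ α)
    (ε : ℝ) (hε : 0 < ε) :
    ∃ g : E → ℝ,
      (∀ x ∈ F, ∀ y ∈ F, |g x - g y| ≤ dist x y ^ α) ∧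
      (g '' F).Finite ∧
      ∀ x ∈ F, |f x - g x| < ε := by
  classical
  obtain ⟨x₀, hx₀⟩ := hFne
  set D₀ := Metric.diam F with hD₀def
  have hD₀0 : 0 ≤ D₀ := Metric.diam_nonneg
  have hdle : ∀ x ∈ F, ∀ z ∈ F, dist x z ≤ D₀ := fun x hx z hz =>
    Metric.dist_le_diam_of_mem hFb hx hz
  set h : ℝ := (ε / 2) ^ (α⁻¹) with hhdef
  have hε2 : (0:ℝ) < ε / 2 := by linarith
  have hh0 : 0 < h := Real.rpow_pos_of_pos hε2 _
  have hhα : h ^ α = ε / 2 := by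
    rw [hhdef, ← Real.rpow_mul hε2.le, inv_mul_cancel₀ hα0.ne', Real.rpow_one]
  -- choose the scale M
  have hq : (0:ℝ) < ρ ^ α := Real.rpow_pos_of_pos hρ0 α
  have hr1 : ν / ρ ^ α < 1 := (div_lt_one hq).mpr hνρ
  have hr0 : (0:ℝ) ≤ ν / ρ ^ α := by positivity
  have t1 : Tendsto (fun M : ℕ => K * ν ^ M) atTop (nhds 0) := by
    simpa using (tendsto_pow_atTop_nhds_zero_of_lt_one hν0.le hν1).const_mul K
  have t2 : Tendsto (fun M : ℕ => (D₀ ^ α * (2 * K * K ^ α)) * (ν / ρ ^ α) ^ M)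
      atTop (nhds 0) := by
    simpa using (tendsto_pow_atTop_nhds_zero_of_lt_one hr0 hr1).const_mul
      (D₀ ^ α * (2 * K * K ^ α))
  have e1 : ∀ᶠ M : ℕ in atTop, K * ν ^ M < h / 2 :=
    t1.eventually_lt_const (by positivity)
  have e2 : ∀ᶠ M : ℕ in atTop, (D₀ ^ α * (2 * K * K ^ α)) * (ν / ρ ^ α) ^ M < h :=
    t2.eventually_lt_const hh0
  obtain ⟨M, hM1, hM2⟩ := (e1.and e2).exists
  obtain ⟨S, hCov, hDiam, hSepS⟩ := hS M
  set D : ℝ := K * ν ^ M with hDdef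
  set s : ℝ := (1 / K) * ρ ^ M with hsdef
  have hD0 : 0 < D := by positivity
  have hs0 : 0 < s := by positivity
  have hswap : ((ρ : ℝ) ^ M) ^ α = (ρ ^ α) ^ M := by
    rw [← Real.rpow_natCast ρ M, ← Real.rpow_mul hρ0.le, mul_comm,
      Real.rpow_mul hρ0.le, Real.rpow_natCast]
  have hsα : s ^ α = (ρ ^ α) ^ M / K ^ α := by
    rw [hsdef, Real.mul_rpow (by positivity) (by positivity), hswap,
      Real.div_rpow (by norm_num) hK.le, Real.one_rpow]
    ring
  have hpow : (0:ℝ) < (ρ ^ α) ^ M := pow_pos hq M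
  have key2 : D₀ ^ α * (2 * K * K ^ α) * ν ^ M ≤ h * (ρ ^ α) ^ M := by
    rw [div_pow, ← mul_div_assoc, div_lt_iff₀ hpow] at hM2
    nlinarith [hM2]
  have hC2 : D₀ ^ α ≤ (h / (2 * D)) * s ^ α := by
    rw [hsα, div_mul_div_comm, le_div_iff₀ (by positivity)]
    have hKα : (0:ℝ) < K ^ α := Real.rpow_pos_of_pos hK α
    have : D₀ ^ α * (2 * D * K ^ α) = D₀ ^ α * (2 * K * K ^ α) * ν ^ M := by
      rw [hDdef]; ring
    rw [this]
    exact key2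
  -- basic piece facts
  have hmemP : ∀ x ∈ F, ∃ A, A ∈ S ∧ x ∈ A := by
    intro x hx
    have := hCov hx
    simpa using this
  have hUniq : ∀ A ∈ S, ∀ B ∈ S, ∀ x : E, x ∈ A → x ∈ B → A = B := by
    intro A hA B hB x hxA hxB
    by_contra hne
    have h1 := hSepS A hA B hB hne
    have h2 : EMetric.infEdist x B = 0 := EMetric.infEdist_zero_of_mem hxB
    have h3 : (⨅ y ∈ A, EMetric.infEdist y B) ≤ EMetric.infEdist x B := iInf₂_le x hxA
    rw [h2] at h3
    have h4 := lt_of_lt_of_le h1 h3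
    simp at h4
  have hRefl : ∀ x ∈ F, Rel S x x := by
    intro x hx
    obtain ⟨A, hA, hxA⟩ := hmemP x hx
    exact ⟨A, hA, hxA, hxA⟩
  have hTrans : ∀ w a b : E, Rel S w a → Rel S a b → Rel S w b := by
    rintro w a b ⟨A, hA, hwA, haA⟩ ⟨B, hB, haB, hbB⟩
    have hAB : A = B := hUniq A hA B hB a haA haB
    exact ⟨A, hA, hwA, hAB ▸ hbB⟩
  have hDlt : ∀ x y : E, Rel S x y → dist x y ≤ D := by
    rintro x y ⟨A, hA, hxA, hyA⟩
    have h1 : edist x y ≤ EMetric.diam A := EMetric.edist_le_diam_of_mem hxA hyA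
    have h2 := lt_of_le_of_lt h1 (hDiam A hA)
    rw [edist_dist] at h2
    by_contra hcon
    push_neg at hcon
    exact absurd h2 (not_lt.mpr (ENNReal.ofReal_le_ofReal hcon.le))
  have hSlt : ∀ x y : E, x ∈ F → y ∈ F → ¬ Rel S x y → s ≤ dist x y := by
    intro x y hx hy hnr
    obtain ⟨A, hA, hxA⟩ := hmemP x hx
    obtain ⟨B, hB, hyB⟩ := hmemP y hy
    have hAB : A ≠ B := fun he => hnr ⟨A, hA, hxA, he ▸ hyB⟩
    have h1 := hSepS A hA B hB hAB
    have h2 : (⨅ u ∈ A, EMetric.infEdist u B) ≤ edist x y :=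
      le_trans (iInf₂_le x hxA) (EMetric.infEdist_le_edist_of_mem hyB)
    have h3 : ENNReal.ofReal s < ENNReal.ofReal (dist x y) := by
      rw [← edist_dist]
      exact lt_of_lt_of_le h1 h2
    by_contra hcon
    push_neg at hcon
    exact absurd h3 (not_lt.mpr (ENNReal.ofReal_le_ofReal hcon.le))
  -- bounds for f
  have hfb : ∀ z ∈ F, f x₀ - D₀ ^ α ≤ f z := by
    intro z hz
    have h1 := hf x₀ hx₀ z hz
    have h2 : dist x₀ z ^ α ≤ D₀ ^ α :=
      Real.rpow_le_rpow dist_nonneg (hdle x₀ hx₀ z hz) hα0.le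
    have h3 : f x₀ - f z ≤ |f x₀ - f z| := le_abs_self _
    linarith
  -- the approximant
  set g : E → ℝ := fun x => sInf ((fun z => f z + del S F α x z) '' F) with hgdef
  have hbdd : ∀ x ∈ F, BddBelow ((fun z => f z + del S F α x z) '' F) := by
    intro x hx
    refine ⟨f x₀ - D₀ ^ α, ?_⟩
    rintro r ⟨z, hz, rfl⟩
    have := hfb z hz
    have := del_nonneg (S := S) (α := α) hx hz
    simp only
    linarith
  have hne : ∀ x : E, ((fun z => f z + del S F α x z) '' F).Nonempty :=
    fun x => ⟨_, ⟨x₀, hx₀, rfl⟩⟩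
  -- KEY estimate
  have hKEY : ∀ x ∈ F, ∀ z ∈ F, dist x z ^ α - ε / 2 ≤ del S F α x z := by
    intro x hx z hz
    apply le_csInf (dset_nonempty hx hz)
    rintro r ⟨l, hChn, rfl⟩
    obtain ⟨hmem, hh, hlast⟩ := hChn
    have hA := dist_le_of_chain hDlt hRefl hTrans l hmem x z x z hh hlast
      (hRefl x hx) (hRefl z hz)
    have hB := cc_one_rpow_le (S := S) hα0 hα1 l
    have hCn := jm_mul_le hs0.le hα0 hSlt l hmem
    have hcc1 : 0 ≤ cc S 1 l := cc_nonneg S 1 l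
    have hjD : 0 ≤ ((jm S l : ℝ) + 1) * D := by positivity
    rcases le_or_gt (((jm S l : ℝ) + 1) * D) h with hcase | hcase
    · have h1 : dist x z ^ α ≤ (cc S 1 l + ((jm S l : ℝ) + 1) * D) ^ α :=
        Real.rpow_le_rpow dist_nonneg hA hα0.le
      have h2 : (cc S 1 l + ((jm S l : ℝ) + 1) * D) ^ α
          ≤ cc S 1 l ^ α + (((jm S l : ℝ) + 1) * D) ^ α :=
        rpow_subadd hcc1 hjD hα0.le hα1
      have h3 : (((jm S l : ℝ) + 1) * D) ^ α ≤ h ^ α :=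
        Real.rpow_le_rpow hjD hcase hα0.le
      rw [hhα] at h3
      linarith
    · have hjm : h / (2 * D) ≤ (jm S l : ℝ) := by
        rcases Nat.eq_zero_or_pos (jm S l) with h0 | h0
        · exfalso
          rw [h0] at hcase
          push_cast at hcase
          linarith
        · have hjm1 : (1:ℝ) ≤ (jm S l : ℝ) := by exact_mod_cast h0
          rw [div_le_iff₀ (by positivity)]
          nlinarith [hcase, hjm1, hD0.le]
      have h4 : (h / (2 * D)) * s ^ α ≤ (jm S l : ℝ) * s ^ α :=
        mul_le_mul_of_nonneg_right hjm (Real.rpow_nonneg hs0.le α)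
      have h5 : dist x z ^ α ≤ D₀ ^ α :=
        Real.rpow_le_rpow dist_nonneg (hdle x hx z hz) hα0.le
      linarith
  -- properties of g
  have hgle : ∀ x ∈ F, g x ≤ f x := by
    intro x hx
    have h1 : g x ≤ f x + del S F α x x := csInf_le (hbdd x hx) ⟨x, hx, rfl⟩
    have h2 := del_self_nonpos (S := S) (α := α) hx
    linarith
  have hgge : ∀ x ∈ F, f x - ε / 2 ≤ g x := by
    intro x hx
    apply le_csInf (hne x)
    rintro r ⟨z, hz, rfl⟩
    have h1 := hf x hx z hz
    have h2 := hKEY x hx z hz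
    have h3 : f x - f z ≤ |f x - f z| := le_abs_self _
    simp only
    linarith
  have hmono : ∀ x ∈ F, ∀ y ∈ F, g x ≤ g y + cost S α x y := by
    intro x hx y hy
    have h1 : ∀ r ∈ ((fun z => f z + del S F α y z) '' F), g x - cost S α x y ≤ r := by
      rintro r ⟨z, hz, rfl⟩
      have h2 : g x ≤ f z + del S F α x z := csInf_le (hbdd x hx) ⟨z, hz, rfl⟩
      have h3 := del_le_cost_add (S := S) (α := α) hx hy hz
      simp only
      linarith
    have h4 := le_csInf (hne y) h1
    have : g x - cost S α x y ≤ g y := h4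
    linarith
  have hgconst : ∀ x ∈ F, ∀ y ∈ F, Rel S x y → g x = g y := by
    intro x hx y hy hR
    have h1 := hmono x hx y hy
    have h2 := hmono y hy x hx
    have hc1 : cost S α x y = 0 := if_pos hR
    have hc2 : cost S α y x = 0 := if_pos (rel_symm hR)
    rw [hc1] at h1
    rw [hc2] at h2
    linarith
  refine ⟨g, ?_, ?_, ?_⟩
  · intro x hx y hy
    rw [abs_sub_le_iff]
    constructor
    · have h1 := hmono x hx y hy
      have h2 := cost_le S α x y
      linarith
    · have h1 := hmono y hy x hx
      have h2 := cost_le S α y x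
      rw [dist_comm y x] at h2
      linarith
  · apply Set.Finite.subset (S.finite_toSet.image (fun A => g (repSel F x₀ A)))
    rintro _ ⟨x, hx, rfl⟩
    obtain ⟨A, hA, hxA⟩ := hmemP x hx
    have hAne : (A ∩ F).Nonempty := ⟨x, hxA, hx⟩
    have hrA := repSel_spec (x₀ := x₀) hAne
    refine ⟨A, hA, ?_⟩
    exact (hgconst x hx (repSel F x₀ A) hrA.2 ⟨A, hA, hxA, hrA.1⟩).symm
  · intro x hx
    have h1 := hgle x hx
    have h2 := hgge x hx
    have h3 : 0 ≤ f x - g x := by linarith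
    rw [abs_of_nonneg h3]
    linarith

set_option maxHeartbeats 1600000 in
/-- Main construction, case `ν < ρ` (covers `α > 1`). -/
theorem main_nu_lt_rho (F : Set E) (hFne : F.Nonempty) (hFb : Bornology.IsBounded F)
    (ν ρ : ℝ) (hν0 : 0 < ν) (hν1 : ν < 1) (hρ0 : 0 < ρ) (hρ1 : ρ < 1)
    (K : ℝ) (hK : 0 < K)
    (hS : ∀ k : ℕ, ∃ S : Finset (Set E), (F ⊆ ⋃ A ∈ S, A) ∧
      (∀ A ∈ S, EMetric.diam A < ENNReal.ofReal (K * ν ^ k)) ∧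
      (∀ A ∈ S, ∀ B ∈ S, A ≠ B →
        ENNReal.ofReal ((1 / K) * ρ ^ k) < ⨅ x ∈ A, EMetric.infEdist x B))
    (α : ℝ) (hα0 : 0 < α) (hνρ : ν < ρ)
    (f : E → ℝ) (hf : ∀ x ∈ F, ∀ y ∈ F, |f x - f y| ≤ dist x y ^ α)
    (ε : ℝ) (hε : 0 < ε) :
    ∃ g : E → ℝ,
      (∀ x ∈ F, ∀ y ∈ F, |g x - g y| ≤ dist x y ^ α) ∧
      (g '' F).Finite ∧
      ∀ x ∈ F, |f x - g x| < ε := by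
  classical
  obtain ⟨x₀, hx₀⟩ := hFne
  set D₀ := Metric.diam F with hD₀def
  have hD₀0 : 0 ≤ D₀ := Metric.diam_nonneg
  have hdle : ∀ x ∈ F, ∀ z ∈ F, dist x z ≤ D₀ := fun x hx z hz =>
    Metric.dist_le_diam_of_mem hFb hx hz
  -- choose the scale M
  have hu0 : (0:ℝ) ≤ ν / ρ := by positivity
  have hu1 : ν / ρ < 1 := (div_lt_one hρ0).mpr hνρ
  have tu : Tendsto (fun M : ℕ => 2 * K * K * (ν / ρ) ^ M) atTop (nhds 0) := by
    simpa using (tendsto_pow_atTop_nhds_zero_of_lt_one hu0 hu1).const_mul (2 * K * K)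
  have tc : Tendsto (fun M : ℕ => (1 + 2 * K * K * (ν / ρ) ^ M) ^ α) atTop (nhds 1) := by
    have h1 : Tendsto (fun M : ℕ => 1 + 2 * K * K * (ν / ρ) ^ M) atTop (nhds 1) := by
      simpa using tendsto_const_nhds.add tu
    have h2 : ContinuousAt (fun x : ℝ => x ^ α) 1 :=
      Real.continuousAt_rpow_const 1 α (Or.inl one_ne_zero)
    have h3 := h2.tendsto.comp h1
    simpa [Function.comp_def, Real.one_rpow] using h3
  have hνα1 : ν ^ α < 1 := Real.rpow_lt_one hν0.le hν1 hα0
  have hνα0 : (0:ℝ) ≤ ν ^ α := Real.rpow_nonneg hν0.le α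
  have hrw : ∀ M : ℕ, (K * ν ^ M) ^ α = K ^ α * (ν ^ α) ^ M := by
    intro M
    rw [Real.mul_rpow hK.le (pow_nonneg hν0.le M)]
    congr 1
    rw [← Real.rpow_natCast ν M, ← Real.rpow_mul hν0.le, mul_comm,
      Real.rpow_mul hν0.le, Real.rpow_natCast]
  have ta : Tendsto (fun M : ℕ => (K * ν ^ M) ^ α) atTop (nhds 0) := by
    have := (tendsto_pow_atTop_nhds_zero_of_lt_one hνα0 hνα1).const_mul (K ^ α)
    simp only [mul_zero] at this
    exact Tendsto.congr (fun M => (hrw M).symm) this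
  have ttot : Tendsto (fun M : ℕ =>
      (K * ν ^ M) ^ α + D₀ ^ α * ((1 + 2 * K * K * (ν / ρ) ^ M) ^ α - 1))
      atTop (nhds 0) := by
    have h1 : Tendsto (fun M : ℕ => (1 + 2 * K * K * (ν / ρ) ^ M) ^ α - 1)
        atTop (nhds 0) := by
      simpa using tc.sub (tendsto_const_nhds (x := (1:ℝ)))
    have h2 := h1.const_mul (D₀ ^ α)
    simp only [mul_zero] at h2
    simpa using ta.add h2
  obtain ⟨M, hM⟩ := (ttot.eventually_lt_const hε).exists
  obtain ⟨S, hCov, hDiam, hSepS⟩ := hS M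
  set D : ℝ := K * ν ^ M with hDdef
  set s : ℝ := (1 / K) * ρ ^ M with hsdef
  have hD0 : 0 < D := by positivity
  have hs0 : 0 < s := by positivity
  -- basic piece facts
  have hmemP : ∀ x ∈ F, ∃ A, A ∈ S ∧ x ∈ A := by
    intro x hx
    have := hCov hx
    simpa using this
  have hUniq : ∀ A ∈ S, ∀ B ∈ S, ∀ x : E, x ∈ A → x ∈ B → A = B := by
    intro A hA B hB x hxA hxB
    by_contra hne
    have h1 := hSepS A hA B hB hne
    have h2 : EMetric.infEdist x B = 0 := EMetric.infEdist_zero_of_mem hxB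
    have h3 : (⨅ y ∈ A, EMetric.infEdist y B) ≤ EMetric.infEdist x B := iInf₂_le x hxA
    rw [h2] at h3
    have h4 := lt_of_lt_of_le h1 h3
    simp at h4
  have hDlt : ∀ x y : E, Rel S x y → dist x y ≤ D := by
    rintro x y ⟨A, hA, hxA, hyA⟩
    have h1 : edist x y ≤ EMetric.diam A := EMetric.edist_le_diam_of_mem hxA hyA
    have h2 := lt_of_le_of_lt h1 (hDiam A hA)
    rw [edist_dist] at h2
    by_contra hcon
    push_neg at hcon
    exact absurd h2 (not_lt.mpr (ENNReal.ofReal_le_ofReal hcon.le))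
  have hSlt : ∀ x y : E, x ∈ F → y ∈ F → ¬ Rel S x y → s ≤ dist x y := by
    intro x y hx hy hnr
    obtain ⟨A, hA, hxA⟩ := hmemP x hx
    obtain ⟨B, hB, hyB⟩ := hmemP y hy
    have hAB : A ≠ B := fun he => hnr ⟨A, hA, hxA, he ▸ hyB⟩
    have h1 := hSepS A hA B hB hAB
    have h2 : (⨅ u ∈ A, EMetric.infEdist u B) ≤ edist x y :=
      le_trans (iInf₂_le x hxA) (EMetric.infEdist_le_edist_of_mem hyB)
    have h3 : ENNReal.ofReal s < ENNReal.ofReal (dist x y) := by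
      rw [← edist_dist]
      exact lt_of_lt_of_le h1 h2
    by_contra hcon
    push_neg at hcon
    exact absurd h3 (not_lt.mpr (ENNReal.ofReal_le_ofReal hcon.le))
  -- the construction
  set q : ℝ := 2 * D / s with hqdef
  have hq0 : 0 ≤ q := by positivity
  have hqs : q * s = 2 * D := by
    rw [hqdef]; field_simp
  set c : ℝ := (1 + q) ^ α with hcdef
  have hc1 : 1 ≤ c := by
    rw [hcdef]
    calc (1:ℝ) = 1 ^ α := (Real.one_rpow α).symm
    _ ≤ (1 + q) ^ α := Real.rpow_le_rpow (by norm_num) (by linarith) hα0.le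
  have hc0 : 0 < c := by linarith
  set rp : E → E := fun x => repSel F x₀ (pieceSel S x) with hrpdef
  set g : E → ℝ := fun x => f x₀ + (f (rp x) - f x₀) / c with hgdef
  have hpc : ∀ x ∈ F, pieceSel S x ∈ S ∧ x ∈ pieceSel S x := by
    intro x hx
    exact pieceSel_spec (hmemP x hx)
  have hrp : ∀ x ∈ F, rp x ∈ pieceSel S x ∧ rp x ∈ F := by
    intro x hx
    have hne : (pieceSel S x ∩ F).Nonempty := ⟨x, (hpc x hx).2, hx⟩
    have := repSel_spec (x₀ := x₀) hne
    exact ⟨this.1, this.2⟩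
  have hRelrp : ∀ x ∈ F, Rel S x (rp x) := by
    intro x hx
    exact ⟨pieceSel S x, (hpc x hx).1, (hpc x hx).2, (hrp x hx).1⟩
  have hrpeq : ∀ x ∈ F, ∀ y ∈ F, Rel S x y → rp x = rp y := by
    intro x hx y hy hR
    obtain ⟨B, hB, hxB, hyB⟩ := hR
    have h1 : pieceSel S x = B := hUniq _ (hpc x hx).1 B hB x (hpc x hx).2 hxB
    have h2 : pieceSel S y = B := hUniq _ (hpc y hy).1 B hB y (hpc y hy).2 hyB
    rw [hrpdef]
    simp only [h1, h2]
  refine ⟨g, ?_, ?_, ?_⟩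
  · intro x hx y hy
    by_cases hR : Rel S x y
    · have hxy := hrpeq x hx y hy hR
      have hgg : g x = g y := by rw [hgdef]; simp only [hxy]
      rw [hgg, sub_self, abs_zero]
      exact Real.rpow_nonneg dist_nonneg α
    · have hsd : s ≤ dist x y := hSlt x y hx hy hR
      have hd0 : 0 < dist x y := lt_of_lt_of_le hs0 hsd
      have hgg : g x - g y = (f (rp x) - f (rp y)) / c := by
        rw [hgdef]
        ring
      have h1 : dist (rp x) (rp y) ≤ dist x y + 2 * D := by
        have ht := dist_triangle4 (rp x) x y (rp y)
        have h2 : dist (rp x) x ≤ D := hDlt _ _ (rel_symm (hRelrp x hx))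
        have h3 : dist y (rp y) ≤ D := hDlt _ _ (hRelrp y hy)
        linarith
      have h2 : dist x y + 2 * D ≤ (1 + q) * dist x y := by
        have := mul_le_mul_of_nonneg_left hsd hq0
        rw [hqs] at this
        nlinarith
      have h3 : |f (rp x) - f (rp y)| ≤ dist (rp x) (rp y) ^ α :=
        hf _ (hrp x hx).2 _ (hrp y hy).2
      have h4 : dist (rp x) (rp y) ^ α ≤ ((1 + q) * dist x y) ^ α :=
        Real.rpow_le_rpow dist_nonneg (by linarith) hα0.le
      have h5 : ((1 + q) * dist x y) ^ α = c * dist x y ^ α := by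
        rw [Real.mul_rpow (by linarith) dist_nonneg, hcdef]
      rw [hgg, abs_div, abs_of_pos hc0, div_le_iff₀ hc0]
      calc |f (rp x) - f (rp y)| ≤ c * dist x y ^ α := by
            rw [← h5]; exact le_trans h3 h4
      _ = dist x y ^ α * c := by ring
  · apply Set.Finite.subset
      (S.finite_toSet.image (fun A => f x₀ + (f (repSel F x₀ A) - f x₀) / c))
    rintro _ ⟨x, hx, rfl⟩
    exact ⟨pieceSel S x, (hpc x hx).1, rfl⟩
  · intro x hx
    have h1 : |f x - f (rp x)| ≤ D ^ α := by
      have h2 := hf x hx _ (hrp x hx).2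
      have h3 : dist x (rp x) ^ α ≤ D ^ α :=
        Real.rpow_le_rpow dist_nonneg (hDlt _ _ (hRelrp x hx)) hα0.le
      linarith
    have h2 : |f (rp x) - g x| ≤ D₀ ^ α * (c - 1) := by
      have hgg : f (rp x) - g x = (f (rp x) - f x₀) * (1 - 1 / c) := by
        rw [hgdef]
        field_simp
        ring
      have h3 : |f (rp x) - f x₀| ≤ D₀ ^ α := by
        have h4 := hf _ (hrp x hx).2 x₀ hx₀
        have h5 : dist (rp x) x₀ ^ α ≤ D₀ ^ α :=
          Real.rpow_le_rpow dist_nonneg (hdle _ (hrp x hx).2 x₀ hx₀) hα0.le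
        linarith
      have h6 : 0 ≤ 1 - 1 / c := by
        have : 1 / c ≤ 1 := by
          rw [div_le_one hc0]; exact hc1
        linarith
      have h7 : 1 - 1 / c ≤ c - 1 := by
        have he : 1 - 1 / c = (c - 1) / c := by
          field_simp
        rw [he]
        exact div_le_self (by linarith) hc1
      rw [hgg, abs_mul, abs_of_nonneg h6]
      have h8 : |f (rp x) - f x₀| * (1 - 1 / c) ≤ D₀ ^ α * (c - 1) := by
        apply mul_le_mul h3 h7 h6 (by positivity)
      exact h8
    have h9 : |f x - g x| ≤ |f x - f (rp x)| + |f (rp x) - g x| := abs_sub_le _ _ _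
    have h10 : D ^ α + D₀ ^ α * (c - 1) < ε := by
      have : c = (1 + 2 * K * K * (ν / ρ) ^ M) ^ α := by
        rw [hcdef, hqdef, hDdef, hsdef]
        congr 2
        rw [div_pow]
        field_simp
      rw [hDdef] at *
      calc (K * ν ^ M) ^ α + D₀ ^ α * (c - 1)
          = (K * ν ^ M) ^ α + D₀ ^ α * ((1 + 2 * K * K * (ν / ρ) ^ M) ^ α - 1) := by
            rw [this]
      _ < ε := hM
    linarith

end Stmt9Aux

/-- If `F` is nonempty compact with a `(ν, ρ)` separated structure
and `0 < α < log ν / log ρ`, then the piecewise constant functions with finitely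
many pieces (i.e. with finite range on `F`) are dense among the 1-Hölder-α
functions on `F` in the supremum metric. -/
theorem stmt9 {p : ℕ} (F : Set (EuclideanSpace ℝ (Fin p)))
    (hFne : F.Nonempty) (hFc : IsCompact F)
    (ν ρ : ℝ) (hν0 : 0 < ν) (hν1 : ν < 1) (hρ0 : 0 < ρ) (hρ1 : ρ < 1)
    (hsep : SepStructure ν ρ F)
    (α : ℝ) (hα0 : 0 < α) (hα1 : α < Real.log ν / Real.log ρ)
    (f : EuclideanSpace ℝ (Fin p) → ℝ)
    (hf : ∀ x ∈ F, ∀ y ∈ F, |f x - f y| ≤ dist x y ^ α)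
    (ε : ℝ) (hε : 0 < ε) :
    ∃ g : EuclideanSpace ℝ (Fin p) → ℝ,
      (∀ x ∈ F, ∀ y ∈ F, |g x - g y| ≤ dist x y ^ α) ∧
      (g '' F).Finite ∧
      ∀ x ∈ F, |f x - g x| < ε := by
  obtain ⟨K, hK, hS⟩ := hsep
  have hlogρ : Real.log ρ < 0 := Real.log_neg hρ0 hρ1
  have hνρα : ν < ρ ^ α := by
    have h1 : Real.log ν < α * Real.log ρ := (lt_div_iff_of_neg hlogρ).mp hα1
    have h2 : ν = Real.exp (Real.log ν) := (Real.exp_log hν0).symm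
    have h3 : ρ ^ α = Real.exp (Real.log ρ * α) := by
      rw [Real.rpow_def_of_pos hρ0]
    rw [h2, h3]
    exact Real.exp_lt_exp.mpr (by linarith)
  rcases le_or_gt α 1 with hle | hgt
  · exact Stmt9Aux.main_le_one F hFne hFc.isBounded ν ρ hν0 hν1 hρ0 hρ1 K hK hS
      α hα0 hle hνρα f hf ε hε
  · have hρα : ρ ^ α < ρ := by
      calc ρ ^ α < ρ ^ (1:ℝ) := Real.rpow_lt_rpow_of_exponent_gt hρ0 hρ1 hgt
      _ = ρ := Real.rpow_one ρ
    exact Stmt9Aux.main_nu_lt_rho F hFne hFc.isBounded ν ρ hν0 hν1 hρ0 hρ1 K hK hS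
      α hα0 (lt_trans hνρα hρα) f hf ε hε

end
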